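/- Let b ≥ 1, let T be a tree with bandwidth at most b, and let G be the graph obtained from T by adding a new vertex w adjacent to all vertices of T. Then G admits an outer (5b−5)-planar drawing. More concretely, if (v_1,…,v_n) is a linear order of V(T) of bandwidth at most b, then the cyclic order (w, v_1, …, v_n) is an outer (5b−5)-planar drawing of G. -/

import Mathlib

open Function

/-- Position of the lower endpoint of an edge in a circular drawing given by
vertex positions `π`. -/
def elo {V : Type*} (π : V → ℕ) : Sym2 V → ℕ :=
  Sym2.lift ⟨fun a b => min (π a) (π b), fun a b => min_comm (π a) (π b)⟩

/-- Position of the upper endpoint of an edge in a circular drawing. -/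
def ehi {V : Type*} (π : V → ℕ) : Sym2 V → ℕ :=
  Sym2.lift ⟨fun a b => max (π a) (π b), fun a b => max_comm (π a) (π b)⟩

/-- Two edges (or vertex pairs) cross (equivalently, the first pierces the
second) in the circular drawing given by positions `π`:
`i < i' < j < j'` or `i' < i < j' < j`. -/
def ecross {V : Type*} (π : V → ℕ) (e f : Sym2 V) : Prop :=
  (elo π e < elo π f ∧ elo π f < ehi π e ∧ ehi π e < ehi π f) ∨
  (elo π f < elo π e ∧ elo π e < ehi π f ∧ ehi π f < ehi π e)

/-- The number of edges of `G` crossing `e` in the circular drawing `π`. -/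
noncomputable def crossNum {V : Type*} (G : SimpleGraph V) (π : V → ℕ)
    (e : Sym2 V) : ℕ :=
  {f | f ∈ G.edgeSet ∧ ecross π e f}.ncard

/-- `π` is an outer `k`-planar drawing of `G`: an injective assignment of
positions (a circular order) such that every edge crosses at most `k` edges. -/
def IsOuterKPlanar {V : Type*} (G : SimpleGraph V) (k : ℕ) (π : V → ℕ) : Prop :=
  Injective π ∧ ∀ e ∈ G.edgeSet, crossNum G π e ≤ k

/-- The graph obtained from `T` by adding a new apex vertex (`none`) adjacent
to all vertices of `T`. -/
def addApex {V : Type*} (T : SimpleGraph V) : SimpleGraph (Option V) :=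
  SimpleGraph.fromRel (fun a b =>
    (a = none ∧ b ≠ none) ∨ (∃ x y, a = some x ∧ b = some y ∧ T.Adj x y))

/-- `T` has bandwidth at most `b`: some linear order of its vertices has all
edge stretches at most `b`. -/
def BandwidthLE {V : Type*} [Fintype V] (T : SimpleGraph V) (b : ℕ) : Prop :=
  ∃ σ : V ≃ Fin (Fintype.card V), ∀ u v, T.Adj u v →
    (σ u : ℕ) ≤ (σ v : ℕ) + b ∧ (σ v : ℕ) ≤ (σ u : ℕ) + b

open SimpleGraph in
lemma tree_child {V : Type*} {T : SimpleGraph V} (hT : T.IsTree) (g : V → ℕ)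
    (hg : Injective g) :
    ∃ c : Sym2 V → V, (∀ e ∈ T.edgeSet, c e ∈ e) ∧ Set.InjOn c T.edgeSet := by
  classical
  obtain ⟨⟨r⟩, huniq⟩ := SimpleGraph.isTree_iff_existsUnique_path.1 hT
  set Q : (v : V) → T.Walk v r := fun v => (huniq v r).choose with hQdef
  have hQpath : ∀ v, (Q v).IsPath := fun v => (huniq v r).choose_spec.1
  have hQeq : ∀ v (p : T.Walk v r), p.IsPath → p = Q v := fun v p hp =>
    (huniq v r).choose_spec.2 p hp ▸ rfl
  set par : V → V := fun v => (Q v).getVert 1 with hpardef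
  -- step lemma
  have hstep : ∀ u, u ≠ r → T.Adj u (par u) ∧ (Q u).length = (Q (par u)).length + 1 := by
    intro u hu
    obtain ⟨w, h, q, hq⟩ := Walk.exists_eq_cons_of_ne hu (Q u)
    have hqp : q.IsPath := by
      have := hQpath u; rw [hq] at this; exact this.of_cons
    have hqQ : q = Q w := hQeq w q hqp
    have hw : par u = w := by
      show (Q u).getVert 1 = w
      rw [hq, Walk.getVert_cons _ _ one_ne_zero, Nat.sub_self, Walk.getVert_zero]
    rw [hw, ← hqQ, hq]
    exact ⟨h, rfl⟩
  have hparr : par r = r := by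
    have : (Walk.nil : T.Walk r r) = Q r := hQeq r Walk.nil (Walk.IsPath.nil)
    show (Q r).getVert 1 = r
    rw [← this]
    rfl
  have hnotboth : ∀ u v, u ≠ v → par u = v → par v = u → False := by
    intro u v huv h1 h2
    have hur : u ≠ r := by rintro rfl; rw [hparr] at h1; exact huv h1
    have hvr : v ≠ r := by rintro rfl; rw [hparr] at h2; exact huv h2.symm
    obtain ⟨-, hl1⟩ := hstep u hur
    obtain ⟨-, hl2⟩ := hstep v hvr
    rw [h1] at hl1; rw [h2] at hl2; omega
  have hone : ∀ u v, T.Adj u v → par u = v ∨ par v = u := by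
    intro u v hadj
    by_cases hu : u ∈ (Q v).support
    · right
      have htake : ((Q v).takeUntil u hu).IsPath := (hQpath v).takeUntil hu
      have hcons : (Walk.cons hadj.symm Walk.nil : T.Walk v u).IsPath := by
        rw [Walk.cons_isPath_iff]
        exact ⟨Walk.IsPath.nil, by simp [hadj.ne']⟩
      have heq : (Q v).takeUntil u hu = Walk.cons hadj.symm Walk.nil :=
        ((huniq v u).unique htake hcons)
      have hspec := (Q v).take_spec hu
      rw [heq] at hspec
      show (Q v).getVert 1 = u
      rw [← hspec, Walk.cons_append, Walk.getVert_cons _ _ one_ne_zero, Nat.sub_self, Walk.getVert_zero]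
    · left
      have hcons : (Walk.cons hadj (Q v)).IsPath := by
        rw [Walk.cons_isPath_iff]; exact ⟨hQpath v, hu⟩
      have : Walk.cons hadj (Q v) = Q u := hQeq u _ hcons
      show (Q u).getVert 1 = v
      rw [← this, Walk.getVert_cons _ _ one_ne_zero, Nat.sub_self, Walk.getVert_zero]
  -- define the child function
  have comm : ∀ u v, (if par u = v then u else if par v = u then v
        else if g u ≤ g v then u else v) =
      (if par v = u then v else if par u = v then u
        else if g v ≤ g u then v else u) := by
    intro u v
    rcases eq_or_ne u v with rfl | huv
    · simp
    by_cases h1 : par u = v <;> by_cases h2 : par v = u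
    · exact (hnotboth u v huv h1 h2).elim
    · simp [h1, h2]
    · simp [h1, h2]
    · simp only [h1, h2, if_false]
      rcases lt_trichotomy (g u) (g v) with h | h | h
      · rw [if_pos h.le, if_neg (by omega)]
      · exact absurd (hg h) huv
      · rw [if_neg (by omega), if_pos h.le]
  refine ⟨Sym2.lift ⟨fun u v => if par u = v then u else if par v = u then v
      else if g u ≤ g v then u else v, comm⟩, ?_, ?_⟩
  · intro e he
    induction e using Sym2.ind with
    | _ u v =>
      simp only [Sym2.lift_mk, Sym2.mem_iff]
      split_ifs <;> simp
  · have key : ∀ e ∈ T.edgeSet, s(Sym2.lift ⟨_, comm⟩ e, par (Sym2.lift ⟨_, comm⟩ e)) = e := by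
      intro e he
      induction e using Sym2.ind with
      | _ u v =>
        have hadj : T.Adj u v := (T.mem_edgeSet).1 he
        simp only [Sym2.lift_mk]
        by_cases h1 : par u = v
        · rw [if_pos h1, h1]
        · have h2 : par v = u := (hone u v hadj).resolve_left h1
          rw [if_neg h1, if_pos h2, h2, Sym2.eq_swap]
    intro e1 he1 e2 he2 hc
    rw [← key e1 he1, ← key e2 he2, hc]

lemma my_ncard_Ico (a b : ℕ) : (Set.Ico a b).ncard = b - a := by
  rw [← Finset.coe_Ico, Set.ncard_coe_finset, Nat.card_Ico]

lemma my_ncard_Ioo (a b : ℕ) : (Set.Ioo a b).ncard = b - a - 1 := by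
  rw [← Finset.coe_Ioo, Set.ncard_coe_finset, Nat.card_Ioo]

lemma addApex_edge {V : Type*} {T : SimpleGraph V} {f : Sym2 (Option V)}
    (hf : f ∈ (addApex T).edgeSet) :
    (∃ w, f = s(Option.none, Option.some w)) ∨
      (∃ x y, T.Adj x y ∧ f = s(Option.some x, Option.some y)) := by
  induction f using Sym2.ind with
  | _ a b =>
    rw [SimpleGraph.mem_edgeSet, addApex, SimpleGraph.fromRel_adj] at hf
    obtain ⟨hne, hrel⟩ := hf
    match a, b with
    | none, none => exact absurd rfl hne
    | none, some w => exact Or.inl ⟨w, rfl⟩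
    | some w, none => exact Or.inl ⟨w, Sym2.eq_swap⟩
    | some x, some y =>
      right
      rcases hrel with (⟨h, -⟩ | ⟨x', y', hx, hy, hadj⟩) | (⟨h, -⟩ | ⟨x', y', hx, hy, hadj⟩)
      · exact absurd h (by simp)
      · rw [Option.some_inj] at hx hy; subst hx; subst hy; exact ⟨x, y, hadj, rfl⟩
      · exact absurd h (by simp)
      · rw [Option.some_inj] at hx hy; subst hx; subst hy
        exact ⟨y, x, hadj, Sym2.eq_swap⟩


/-- If a tree `T` has a vertex order `σ` of bandwidth at most `b` (with `b ≥ 1`),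
then the apex extension of `T` admits an outer `(5b-5)`-planar drawing; more
concretely, the circular order `(w, v_1, …, v_n)` (apex first, then the vertices
of `T` in the order `σ`) is such a drawing. -/

theorem stmt6 {V : Type*} [Fintype V] (T : SimpleGraph V) (hT : T.IsTree)
    (b : ℕ) (hb : 1 ≤ b) (σ : V ≃ Fin (Fintype.card V))
    (hband : ∀ u v, T.Adj u v →
      (σ u : ℕ) ≤ (σ v : ℕ) + b ∧ (σ v : ℕ) ≤ (σ u : ℕ) + b) :
    IsOuterKPlanar (addApex T) (5 * b - 5)
        (fun a => a.elim 0 (fun v => (σ v : ℕ) + 1)) ∧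
    ∃ π : Option V → ℕ, IsOuterKPlanar (addApex T) (5 * b - 5) π := by
  classical
  set π : Option V → ℕ := fun a => a.elim 0 (fun v => (σ v : ℕ) + 1) with hπ
  have hπn : π none = 0 := rfl
  have hπs : ∀ v, π (some v) = (σ v : ℕ) + 1 := fun v => rfl
  have hσinj : Injective (fun v => (σ v : ℕ)) := fun a b h =>
    σ.injective (Fin.val_injective h)
  obtain ⟨c, hcmem, hcinj⟩ := tree_child hT (fun v => (σ v : ℕ)) hσinj
  have hne : Nonempty V := hT.isConnected.nonempty
  set r : V := Classical.arbitrary V with hr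
  set down : Sym2 (Option V) → Sym2 V := Sym2.map (fun o => o.getD r) with hdown
  set F : Sym2 (Option V) → ℕ := fun f => (σ (c (down f)) : ℕ) with hF
  have hdownmk : ∀ x y : V, down s(Option.some x, Option.some y) = s(x, y) := by
    intro x y; simp [hdown]
  have hFval : ∀ x y : V, T.Adj x y →
      F s(Option.some x, Option.some y) = (σ x : ℕ) ∨
        F s(Option.some x, Option.some y) = (σ y : ℕ) := by
    intro x y hxy
    have hm := hcmem s(x, y) (T.mem_edgeSet.2 hxy)
    rw [Sym2.mem_iff] at hm
    have heq : F s(Option.some x, Option.some y) = (σ (c s(x, y)) : ℕ) := by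
      show (σ (c (down s(Option.some x, Option.some y))) : ℕ) = _
      rw [hdownmk x y]
    rcases hm with h | h
    · left; rw [heq, h]
    · right; rw [heq, h]
  have hFinj : ∀ f1 f2 : Sym2 (Option V),
      (∃ x y, T.Adj x y ∧ f1 = s(Option.some x, Option.some y)) →
      (∃ x y, T.Adj x y ∧ f2 = s(Option.some x, Option.some y)) →
      F f1 = F f2 → f1 = f2 := by
    rintro f1 f2 ⟨x1, y1, h1, rfl⟩ ⟨x2, y2, h2, rfl⟩ heq
    have heq' : (σ (c s(x1, y1)) : ℕ) = (σ (c s(x2, y2)) : ℕ) := by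
      rw [show ((σ (c s(x1,y1)) : ℕ)) = F s(Option.some x1, Option.some y1) from by
        show _ = (σ (c (down _)) : ℕ); rw [hdownmk], heq]
      show (σ (c (down _)) : ℕ) = _; rw [hdownmk]
    have hcc : c s(x1, y1) = c s(x2, y2) := σ.injective (Fin.val_injective heq')
    have hde := hcinj (T.mem_edgeSet.2 h1) (T.mem_edgeSet.2 h2) hcc
    have := congrArg (Sym2.map Option.some) hde
    simpa using this
  -- injectivity of π
  have hinjπ : Injective π := by
    intro a b hab
    match a, b with
    | none, none => rfl
    | none, some w => rw [hπn, hπs] at hab; omega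
    | some w, none => rw [hπn, hπs] at hab; omega
    | some w1, some w2 =>
      rw [hπs, hπs] at hab
      exact congrArg _ (σ.injective (Fin.val_injective (by omega)))
  have key : ∀ e ∈ (addApex T).edgeSet, crossNum (addApex T) π e ≤ 5 * b - 5 := by
    intro e he
    rcases addApex_edge he with ⟨v, rfl⟩ | ⟨u, v, huv, rfl⟩
    · -- apex edge, i := σ v
      have hsub : ∀ f ∈ {f | f ∈ (addApex T).edgeSet ∧
            ecross π s(Option.none, Option.some v) f},
          F f ∈ Set.Ico ((σ v : ℕ) + 1 - b) (σ v : ℕ) ∪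
            Set.Ioo (σ v : ℕ) ((σ v : ℕ) + b) := by
        rintro f ⟨hfe, hfc⟩
        rcases addApex_edge hfe with ⟨w, rfl⟩ | ⟨x, y, hxy, rfl⟩
        · exfalso
          simp only [ecross, elo, ehi, Sym2.lift_mk, hπn, hπs] at hfc
          omega
        · obtain ⟨h1, h2⟩ := hband x y hxy
          simp only [ecross, elo, ehi, Sym2.lift_mk, hπn, hπs] at hfc
          rcases hFval x y hxy with h | h <;>
            (rw [h]; simp only [Set.mem_union, Set.mem_Ico, Set.mem_Ioo]; omega)
      have hinj : Set.InjOn F {f | f ∈ (addApex T).edgeSet ∧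
          ecross π s(Option.none, Option.some v) f} := by
        rintro f1 ⟨hf1e, hf1c⟩ f2 ⟨hf2e, hf2c⟩ heq
        have t1 : ∃ x y, T.Adj x y ∧ f1 = s(Option.some x, Option.some y) := by
          rcases addApex_edge hf1e with ⟨w, rfl⟩ | h
          · exfalso
            simp only [ecross, elo, ehi, Sym2.lift_mk, hπn, hπs] at hf1c; omega
          · exact h
        have t2 : ∃ x y, T.Adj x y ∧ f2 = s(Option.some x, Option.some y) := by
          rcases addApex_edge hf2e with ⟨w, rfl⟩ | h
          · exfalso
            simp only [ecross, elo, ehi, Sym2.lift_mk, hπn, hπs] at hf2c; omega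
          · exact h
        exact hFinj f1 f2 t1 t2 heq
      have hle := Set.ncard_le_ncard_of_injOn F hsub hinj (Set.toFinite _)
      have hU := Set.ncard_union_le (Set.Ico ((σ v : ℕ) + 1 - b) (σ v : ℕ))
        (Set.Ioo (σ v : ℕ) ((σ v : ℕ) + b))
      rw [my_ncard_Ico, my_ncard_Ioo] at hU
      show Set.ncard _ ≤ 5 * b - 5
      omega
    · -- tree edge
      obtain ⟨hb1, hb2⟩ := hband u v huv
      have hSa : {f | (f ∈ (addApex T).edgeSet ∧
            ecross π s(Option.some u, Option.some v) f) ∧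
            ∃ w, f = s(Option.none, Option.some w)}.ncard
          ≤ b - 1 := by
        have hsub : ∀ f ∈ {f | (f ∈ (addApex T).edgeSet ∧
              ecross π s(Option.some u, Option.some v) f) ∧
              ∃ w, f = s(Option.none, Option.some w)},
            ehi π f ∈ Set.Ioo (min (σ u : ℕ) (σ v : ℕ) + 1)
              (max (σ u : ℕ) (σ v : ℕ) + 1) := by
          rintro f ⟨⟨hfe, hfc⟩, w, rfl⟩
          simp only [ecross, elo, ehi, Sym2.lift_mk, hπn, hπs] at hfc ⊢
          simp only [Set.mem_Ioo]
          omega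
        have hinj : Set.InjOn (ehi π) {f | (f ∈ (addApex T).edgeSet ∧
            ecross π s(Option.some u, Option.some v) f) ∧
            ∃ w, f = s(Option.none, Option.some w)} := by
          rintro f1 ⟨-, w1, rfl⟩ f2 ⟨-, w2, rfl⟩ heq
          simp only [ehi, Sym2.lift_mk, hπn, hπs] at heq
          have : σ w1 = σ w2 := Fin.val_injective (by omega)
          rw [σ.injective this]
        have := Set.ncard_le_ncard_of_injOn _ hsub hinj (Set.toFinite _)
        rw [my_ncard_Ioo] at this
        omega
      have hSt : {f | (f ∈ (addApex T).edgeSet ∧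
            ecross π s(Option.some u, Option.some v) f) ∧
            ∃ x y, T.Adj x y ∧ f = s(Option.some x, Option.some y)}.ncard
          ≤ (b - 1) + (b - 1) + (b - 1) := by
        have hsub : ∀ f ∈ {f | (f ∈ (addApex T).edgeSet ∧
              ecross π s(Option.some u, Option.some v) f) ∧
              ∃ x y, T.Adj x y ∧ f = s(Option.some x, Option.some y)},
            F f ∈ Set.Ico (min (σ u : ℕ) (σ v : ℕ) + 1 - b) (min (σ u : ℕ) (σ v : ℕ))
              ∪ Set.Ioo (min (σ u : ℕ) (σ v : ℕ)) (max (σ u : ℕ) (σ v : ℕ))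
              ∪ Set.Ioo (max (σ u : ℕ) (σ v : ℕ)) (max (σ u : ℕ) (σ v : ℕ) + b) := by
          rintro f ⟨⟨hfe, hfc⟩, x, y, hxy, rfl⟩
          obtain ⟨h1, h2⟩ := hband x y hxy
          simp only [ecross, elo, ehi, Sym2.lift_mk, hπn, hπs] at hfc
          rcases hFval x y hxy with h | h <;>
            (rw [h]; simp only [Set.mem_union, Set.mem_Ico, Set.mem_Ioo]; omega)
        have hinj : Set.InjOn F {f | (f ∈ (addApex T).edgeSet ∧
            ecross π s(Option.some u, Option.some v) f) ∧
            ∃ x y, T.Adj x y ∧ f = s(Option.some x, Option.some y)} := by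
          rintro f1 ⟨-, t1⟩ f2 ⟨-, t2⟩ heq
          exact hFinj f1 f2 t1 t2 heq
        have hle := Set.ncard_le_ncard_of_injOn _ hsub hinj (Set.toFinite _)
        have h1 := Set.ncard_union_le
          (Set.Ico (min (σ u : ℕ) (σ v : ℕ) + 1 - b) (min (σ u : ℕ) (σ v : ℕ))
            ∪ Set.Ioo (min (σ u : ℕ) (σ v : ℕ)) (max (σ u : ℕ) (σ v : ℕ)))
          (Set.Ioo (max (σ u : ℕ) (σ v : ℕ)) (max (σ u : ℕ) (σ v : ℕ) + b))
        have h2 := Set.ncard_union_le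
          (Set.Ico (min (σ u : ℕ) (σ v : ℕ) + 1 - b) (min (σ u : ℕ) (σ v : ℕ)))
          (Set.Ioo (min (σ u : ℕ) (σ v : ℕ)) (max (σ u : ℕ) (σ v : ℕ)))
        rw [my_ncard_Ico, my_ncard_Ioo] at h2
        rw [my_ncard_Ioo] at h1
        omega
      have hsplit : {f | f ∈ (addApex T).edgeSet ∧
            ecross π s(Option.some u, Option.some v) f} ⊆
          {f | (f ∈ (addApex T).edgeSet ∧
            ecross π s(Option.some u, Option.some v) f) ∧
            ∃ w, f = s(Option.none, Option.some w)} ∪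
          {f | (f ∈ (addApex T).edgeSet ∧
            ecross π s(Option.some u, Option.some v) f) ∧
            ∃ x y, T.Adj x y ∧ f = s(Option.some x, Option.some y)} := by
        intro f hf
        rcases addApex_edge hf.1 with h | h
        · exact Or.inl ⟨hf, h⟩
        · exact Or.inr ⟨hf, h⟩
      have hcard := le_trans (Set.ncard_le_ncard hsplit (Set.toFinite _))
        (Set.ncard_union_le _ _)
      show Set.ncard _ ≤ 5 * b - 5
      omega
  exact ⟨⟨hinjπ, key⟩, π, hinjπ, key⟩
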